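/- Let (X,d) be a doubling metric space. Then d satisfies the Besicovitch covering property (BCP) if and only if d satisfies the weak Besicovitch covering property (WBCP). -/

import Mathlib

open Metric Set
open scoped ENNReal

/-- The distance of the metric space `X` satisfies the Besicovitch covering property:
there is `N ≥ 1` such that, for every bounded set `A` and every family of closed balls
(recorded as pairs (center, radius) with positive radius) whose centers exhaust `A`,
one can extract a countable subfamily covering `A` with overlap at most `N` at every
point. -/
def HasBCP (X : Type*) [MetricSpace X] : Prop :=
  ∃ N : ℕ, 1 ≤ N ∧
    ∀ (A : Set X) (ℬ : Set (X × ℝ)),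
      Bornology.IsBounded A →
      (∀ p ∈ ℬ, 0 < p.2) →
      (∀ x ∈ A, ∃ r : ℝ, 0 < r ∧ (x, r) ∈ ℬ) →
      ∃ F ⊆ ℬ, F.Countable ∧
        A ⊆ (⋃ p ∈ F, closedBall p.1 p.2) ∧
        ∀ y : X, {p ∈ F | y ∈ closedBall p.1 p.2}.encard ≤ (N : ℕ∞)

/-- A Besicovitch family of closed balls (recorded as pairs (center, radius) with
positive radius): no ball contains the center of another one, and all the balls have a
common point. -/
def IsBesicovitchFamily {X : Type*} [MetricSpace X] (ℬ : Set (X × ℝ)) : Prop :=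
  (∀ p ∈ ℬ, 0 < p.2) ∧
  (∀ p ∈ ℬ, ∀ q ∈ ℬ, p ≠ q → p.1 ∉ closedBall q.1 q.2) ∧
  (⋂ p ∈ ℬ, closedBall p.1 p.2).Nonempty

/-- The distance of the metric space `X` satisfies the weak Besicovitch covering
property: there is a uniform bound `K ≥ 1` on the cardinality of Besicovitch families
of balls. -/
def HasWBCP (X : Type*) [MetricSpace X] : Prop :=
  ∃ K : ℕ, 1 ≤ K ∧ ∀ ℬ : Set (X × ℝ), IsBesicovitchFamily ℬ → ℬ.encard ≤ (K : ℕ∞)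


private lemma aux_cover {X : Type*} [MetricSpace X] {D : ℕ}
    (hD : ∀ (x : X) (r : ℝ), 0 < r →
      ∃ s : Finset X, s.card ≤ D ∧ closedBall x (2 * r) ⊆ ⋃ y ∈ s, closedBall y r) :
    ∀ (m : ℕ) (x : X) (r : ℝ), 0 < r →
      ∃ s : Finset X, s.card ≤ D ^ m ∧ closedBall x (2 ^ m * r) ⊆ ⋃ y ∈ s, closedBall y r := by
  classical
  intro m
  induction m with
  | zero => exact fun x r hr => ⟨{x}, by simp, by simp⟩
  | succ m ih =>
    intro x r hr
    obtain ⟨s, hs, hsub⟩ := ih x (2 * r) (by linarith)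
    choose f hf1 hf2 using fun y : X => hD y r hr
    refine ⟨s.biUnion f, ?_, ?_⟩
    · calc (s.biUnion f).card ≤ ∑ y ∈ s, (f y).card := Finset.card_biUnion_le
        _ ≤ ∑ _y ∈ s, D := Finset.sum_le_sum fun y _ => hf1 y
        _ = s.card * D := by rw [Finset.sum_const, smul_eq_mul]
        _ ≤ D ^ m * D := Nat.mul_le_mul_right _ hs
        _ = D ^ (m + 1) := by ring
    · intro z hz
      have hz' : z ∈ closedBall x (2 ^ m * (2 * r)) := by
        rwa [show (2 : ℝ) ^ m * (2 * r) = 2 ^ (m + 1) * r by ring]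
      obtain ⟨y, hy, hzy⟩ := Set.mem_iUnion₂.1 (hsub hz')
      obtain ⟨w, hw, hzw⟩ := Set.mem_iUnion₂.1 (hf2 y hzy)
      exact Set.mem_iUnion₂.2 ⟨w, Finset.mem_biUnion.2 ⟨y, hy, hw⟩, hzw⟩

private lemma aux_sep {X : Type*} [MetricSpace X] {D : ℕ}
    (hD : ∀ (x : X) (r : ℝ), 0 < r →
      ∃ s : Finset X, s.card ≤ D ∧ closedBall x (2 * r) ⊆ ⋃ y ∈ s, closedBall y r)
    (m : ℕ) {t : Set X} {x : X} {r : ℝ} (hr : 0 < r)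
    (ht : t ⊆ closedBall x (2 ^ m * r))
    (hsep : t.Pairwise fun a b => 2 * r < dist a b) :
    t.encard ≤ ((D ^ m : ℕ) : ℕ∞) := by
  obtain ⟨s, hs, hsub⟩ := aux_cover hD m x r hr
  have hchoice : ∀ a ∈ t, ∃ y, y ∈ s ∧ a ∈ closedBall y r := by
    intro a ha
    obtain ⟨y, hy, hay⟩ := Set.mem_iUnion₂.1 (hsub (ht ha))
    exact ⟨y, hy, hay⟩
  choose! f hf1 hf2 using hchoice
  have hinj : Set.InjOn f t := by
    intro a ha b hb hab
    by_contra hne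
    have h1 := hsep ha hb hne
    have d1 : dist a (f a) ≤ r := mem_closedBall.1 (hf2 a ha)
    have d2 : dist b (f b) ≤ r := mem_closedBall.1 (hf2 b hb)
    have hd : dist a b ≤ dist a (f a) + dist (f b) b := by
      rw [hab]; exact dist_triangle a (f b) b
    rw [dist_comm (f b) b] at hd
    linarith
  calc t.encard = (f '' t).encard := hinj.encard_image.symm
    _ ≤ (↑s : Set X).encard := Set.encard_mono (by rintro y ⟨a, ha, rfl⟩; exact hf1 a ha)
    _ = (s.card : ℕ∞) := Set.encard_coe_eq_coe_finsetCard s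
    _ ≤ ((D ^ m : ℕ) : ℕ∞) := by exact_mod_cast hs

private lemma aux_max {X : Type*} [MetricSpace X] (S : Set X) (ε : ℝ) :
    ∃ G ⊆ S, (G.Pairwise fun a b => ε < dist a b) ∧
      ∀ z ∈ S, z ∉ G → ∃ x ∈ G, dist z x ≤ ε := by
  have hchain : ∀ c ⊆ {G : Set X | G ⊆ S ∧ G.Pairwise fun a b => ε < dist a b},
      IsChain (fun x1 x2 => x1 ⊆ x2) c →
      ∃ ub ∈ {G : Set X | G ⊆ S ∧ G.Pairwise fun a b => ε < dist a b}, ∀ s ∈ c, s ⊆ ub := by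
    intro c hc hchain
    refine ⟨⋃₀ c, ⟨?_, ?_⟩, fun s hs => subset_sUnion_of_mem hs⟩
    · exact sUnion_subset fun s hs => (hc hs).1
    · intro a ha b hb hab
      obtain ⟨s1, hs1, ha1⟩ := ha
      obtain ⟨s2, hs2, hb2⟩ := hb
      rcases eq_or_ne s1 s2 with rfl | hne
      · exact (hc hs1).2 ha1 hb2 hab
      · rcases hchain hs1 hs2 hne with h | h
        · exact (hc hs2).2 (h ha1) hb2 hab
        · exact (hc hs1).2 ha1 (h hb2) hab
  obtain ⟨G, hG⟩ := zorn_subset {G : Set X | G ⊆ S ∧ G.Pairwise fun a b => ε < dist a b} hchain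
  refine ⟨G, hG.prop.1, hG.prop.2, ?_⟩
  intro z hz hzG
  by_contra h
  push_neg at h
  have hins : insert z G ∈ {G : Set X | G ⊆ S ∧ G.Pairwise fun a b => ε < dist a b} := by
    refine ⟨insert_subset hz hG.prop.1, ?_⟩
    have hsymm : Std.Symm (fun a b : X => ε < dist a b) := ⟨by
      intro a b hab
      rwa [dist_comm]⟩
    exact (Set.pairwise_insert_of_symm).2 ⟨hG.prop.2, fun b hb _ => h b hb⟩
  exact hzG (hG.2 hins (subset_insert z G) (mem_insert z G))

private lemma aux_sum {α : Type*} (t : Finset ℕ) (f : ℕ → Set α) (m : ℕ∞)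
    (h : ∀ k, (f k).encard ≤ m) : (⋃ k ∈ t, f k).encard ≤ t.card * m := by
  classical
  induction t using Finset.induction_on with
  | empty => simp
  | @insert a t ha ih =>
    rw [Finset.set_biUnion_insert, Finset.card_insert_of_notMem ha]
    calc (f a ∪ ⋃ k ∈ t, f k).encard ≤ (f a).encard + (⋃ k ∈ t, f k).encard :=
          Set.encard_union_le _ _
      _ ≤ m + (t.card : ℕ∞) * m := add_le_add (h a) ih
      _ = ((t.card + 1 : ℕ) : ℕ∞) * m := by push_cast; rw [add_mul, one_mul, add_comm]

/-- In a doubling metric space, BCP and WBCP are equivalent. -/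
theorem stmt15 {X : Type*} [MetricSpace X]
    (hdoub : ∃ D : ℕ, 1 ≤ D ∧ ∀ (x : X) (r : ℝ), 0 < r →
      ∃ s : Finset X, s.card ≤ D ∧ closedBall x (2 * r) ⊆ ⋃ y ∈ s, closedBall y r) :
    HasBCP X ↔ HasWBCP X := by
  obtain ⟨D, hD1, hD⟩ := hdoub
  constructor
  · -- BCP → WBCP
    rintro ⟨N, hN1, hN⟩
    refine ⟨N, hN1, ?_⟩
    intro ℬ hB
    by_contra hcon
    push_neg at hcon
    have h1 : ((N + 1 : ℕ) : ℕ∞) ≤ ℬ.encard := by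
      push_cast
      exact Order.add_one_le_of_lt hcon
    obtain ⟨t, htB, hte⟩ := Set.exists_subset_encard_eq h1
    have htf : t.Finite := Set.finite_of_encard_eq_coe hte
    obtain ⟨F, hFt, _, hFcov, hFover⟩ :=
      hN (Prod.fst '' t) t ((htf.image _).isBounded)
        (fun p hp => hB.1 p (htB hp))
        (by
          rintro x ⟨p, hp, rfl⟩
          exact ⟨p.2, hB.1 p (htB hp), by simpa using hp⟩)
    have htF : t ⊆ F := by
      intro p hp
      have hpA : p.1 ∈ Prod.fst '' t := ⟨p, hp, rfl⟩
      obtain ⟨q, hq, hmem⟩ := Set.mem_iUnion₂.1 (hFcov hpA)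
      rcases eq_or_ne p q with rfl | hne
      · exact hq
      · exact absurd hmem (hB.2.1 p (htB hp) q (htB (hFt hq)) hne)
    obtain ⟨z, hz⟩ := hB.2.2
    have hsub : t ⊆ {p ∈ F | z ∈ closedBall p.1 p.2} :=
      fun p hp => ⟨htF hp, Set.mem_iInter₂.1 hz p (htB hp)⟩
    have hfin := (Set.encard_mono hsub).trans (hFover z)
    rw [hte] at hfin
    have : N + 1 ≤ N := by exact_mod_cast hfin
    omega
  · -- WBCP → BCP
    rintro ⟨K, hK1, hK⟩
    refine ⟨K * D ^ 2, le_trans hK1 (Nat.le_mul_of_pos_right K (by positivity)), ?_⟩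
    intro A ℬ hA hpos hcov
    rcases A.eq_empty_or_nonempty with rfl | hAne
    · exact ⟨∅, empty_subset _, countable_empty, by simp, by simp⟩
    -- choose radii
    have hex : ∀ x : X, ∃ r : ℝ, x ∈ A → (0 < r ∧ (x, r) ∈ ℬ) := by
      intro x
      by_cases hx : x ∈ A
      · obtain ⟨r, hr⟩ := hcov x hx; exact ⟨r, fun _ => hr⟩
      · exact ⟨1, fun h => absurd h hx⟩
    choose ρ hρ using hex
    have hρpos : ∀ x ∈ A, 0 < ρ x := fun x hx => (hρ x hx).1
    have hρB : ∀ x ∈ A, (x, ρ x) ∈ ℬ := fun x hx => (hρ x hx).2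
    by_cases hbig : ∃ x ∈ A, A ⊆ closedBall x (ρ x)
    · obtain ⟨x, hx, hsub⟩ := hbig
      refine ⟨{(x, ρ x)}, by simp [hρB x hx], countable_singleton _, ?_, ?_⟩
      · intro z hz
        exact Set.mem_iUnion₂.2 ⟨(x, ρ x), rfl, hsub hz⟩
      · intro y
        calc {p ∈ ({(x, ρ x)} : Set (X × ℝ)) | y ∈ closedBall p.1 p.2}.encard
            ≤ ({(x, ρ x)} : Set (X × ℝ)).encard := Set.encard_mono (sep_subset _ _)
          _ = 1 := Set.encard_singleton _
          _ ≤ ((K * D ^ 2 : ℕ) : ℕ∞) := by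
              have : 1 ≤ K * D ^ 2 := le_trans hK1 (Nat.le_mul_of_pos_right K (by positivity))
              exact_mod_cast this
    push_neg at hbig
    obtain ⟨R, hR⟩ := Metric.isBounded_iff.1 hA
    have hρR : ∀ x ∈ A, ρ x < R := by
      intro x hx
      obtain ⟨y, hy, hmem⟩ := Set.not_subset.1 (hbig x hx)
      have : ρ x < dist y x := by simpa [mem_closedBall] using hmem
      exact this.trans_le (hR hy hx)
    obtain ⟨x₀, hx₀⟩ := hAne
    have hRpos : 0 < R := (hρpos x₀ hx₀).trans (hρR x₀ hx₀)
    -- generations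
    have hgen : ∀ x, ∃ k : ℕ, x ∈ A → (R / 2 ^ (k + 1) < ρ x ∧ ρ x ≤ R / 2 ^ k) := by
      intro x
      by_cases hx : x ∈ A
      · have hpx := hρpos x hx
        have hexk : ∃ k : ℕ, R / 2 ^ (k + 1) < ρ x := by
          obtain ⟨n, hn⟩ := pow_unbounded_of_one_lt (R / ρ x) (one_lt_two (α := ℝ))
          refine ⟨n, ?_⟩
          rw [div_lt_iff₀ hpx] at hn
          rw [div_lt_iff₀ (by positivity : (0:ℝ) < 2 ^ (n + 1))]
          have h2 : (2:ℝ) ^ n ≤ 2 ^ (n + 1) := by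
            apply pow_le_pow_right₀ (by norm_num) (Nat.le_succ n)
          nlinarith
        refine ⟨Nat.find hexk, fun _ => ⟨Nat.find_spec hexk, ?_⟩⟩
        rcases Nat.eq_zero_or_pos (Nat.find hexk) with h0 | hpos'
        · rw [h0]
          simpa using (hρR x hx).le
        · obtain ⟨m, hm⟩ : ∃ m, Nat.find hexk = m + 1 := ⟨Nat.find hexk - 1, by omega⟩
          rw [hm]
          have := Nat.find_min hexk (m := m) (by omega)
          push_neg at this
          exact this
      · exact ⟨0, fun h => absurd h hx⟩
    choose gen hgen using hgen
    set I : ℕ → Set X := fun k => {x | x ∈ A ∧ gen x = k} with hI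
    have hIlow : ∀ k, ∀ x ∈ I k, R / 2 ^ (k + 1) < ρ x := by
      rintro k x ⟨hxA, hxk⟩
      simpa [hxk] using (hgen x hxA).1
    have hIhigh : ∀ k, ∀ x ∈ I k, ρ x ≤ R / 2 ^ k := by
      rintro k x ⟨hxA, hxk⟩
      simpa [hxk] using (hgen x hxA).2
    -- recursive construction
    obtain ⟨pick, hpick⟩ : ∃ pick : ℕ → Set X → Set X, ∀ (k : ℕ) (U : Set X),
        pick k U ⊆ I k \ U ∧
        ((pick k U).Pairwise fun a b => R / 2 ^ (k + 1) < dist a b) ∧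
        ∀ z ∈ I k \ U, z ∉ pick k U → ∃ x ∈ pick k U, dist z x ≤ R / 2 ^ (k + 1) :=
      ⟨fun k U => (aux_max (I k \ U) (R / 2 ^ (k + 1))).choose,
       fun k U => (aux_max (I k \ U) (R / 2 ^ (k + 1))).choose_spec⟩
    obtain ⟨U, hU0, hUsucc⟩ : ∃ U : ℕ → Set X, U 0 = ∅ ∧
        ∀ k, U (k + 1) = U k ∪ ⋃ x ∈ pick k (U k), closedBall x (ρ x) :=
      ⟨fun k => Nat.rec ∅ (fun k Uk => Uk ∪ ⋃ x ∈ pick k Uk, closedBall x (ρ x)) k,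
       rfl, fun k => rfl⟩
    set G : ℕ → Set X := fun k => pick k (U k) with hGdef
    have hGsub : ∀ k, G k ⊆ I k \ U k := fun k => (hpick k (U k)).1
    have hGsep : ∀ k, (G k).Pairwise fun a b => R / 2 ^ (k + 1) < dist a b :=
      fun k => (hpick k (U k)).2.1
    have hGmax : ∀ k, ∀ z ∈ I k \ U k, z ∉ G k → ∃ x ∈ G k, dist z x ≤ R / 2 ^ (k + 1) :=
      fun k => (hpick k (U k)).2.2
    have hGA : ∀ k, ∀ x ∈ G k, x ∈ A := fun k x hx => ((hGsub k hx).1).1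
    have hUmono : ∀ j k, j ≤ k → U j ⊆ U k := by
      intro j k hjk
      induction k with
      | zero => rw [Nat.le_zero.1 hjk]
      | succ k ih =>
        rcases Nat.lt_or_ge j (k + 1) with h | h
        · exact (ih (by omega)).trans (by rw [hUsucc k]; exact subset_union_left)
        · rw [Nat.le_antisymm hjk h]
    have hballU : ∀ j k, j < k → ∀ x ∈ G j, closedBall x (ρ x) ⊆ U k := by
      intro j k hjk x hx
      refine subset_trans ?_ (hUmono (j + 1) k hjk)
      rw [hUsucc j]
      intro z hz
      exact Set.mem_union_right _ (Set.mem_biUnion hx hz)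
    -- cross-generation separation
    have hcross : ∀ j k, j < k → ∀ a ∈ G j, ∀ b ∈ G k,
        ρ a < dist a b ∧ ρ b < dist a b := by
      intro j k hjk a ha b hb
      have hbU : b ∉ U k := (hGsub k hb).2
      have hab : ρ a < dist a b := by
        by_contra h
        push_neg at h
        exact hbU (hballU j k hjk a ha (by rwa [mem_closedBall, dist_comm]))
      refine ⟨hab, lt_of_le_of_lt ?_ hab⟩
      calc ρ b ≤ R / 2 ^ k := hIhigh k b (hGsub k hb).1
        _ ≤ R / 2 ^ (j + 1) := by
            gcongr
            · norm_num
            · omega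
        _ ≤ ρ a := (hIlow j a (hGsub j ha).1).le
    -- covering
    have hcovered : A ⊆ ⋃ k, ⋃ x ∈ G k, closedBall x (ρ x) := by
      have hUcov : ∀ k, U k ⊆ ⋃ k', ⋃ x ∈ G k', closedBall x (ρ x) := by
        intro k
        induction k with
        | zero => rw [hU0]; exact empty_subset _
        | succ k ih =>
          rw [hUsucc k]
          exact union_subset ih (Set.subset_iUnion_of_subset k subset_rfl)
      intro x hxA
      set k := gen x with hk
      have hxI : x ∈ I k := ⟨hxA, rfl⟩
      by_cases hxU : x ∈ U k
      · exact hUcov k hxU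
      by_cases hxG : x ∈ G k
      · exact Set.mem_iUnion.2 ⟨k, Set.mem_iUnion₂.2 ⟨x, hxG, by simp [(hρpos x hxA).le]⟩⟩
      obtain ⟨x', hx', hdist⟩ := hGmax k x ⟨hxI, hxU⟩ hxG
      refine Set.mem_iUnion.2 ⟨k, Set.mem_iUnion₂.2 ⟨x', hx', ?_⟩⟩
      rw [mem_closedBall]
      exact hdist.trans (hIlow k x' (hGsub k hx').1).le
    -- G k is finite
    have hGfin : ∀ k, (G k).Finite := by
      intro k
      have hr' : (0:ℝ) < R / 2 ^ (k + 2) := by positivity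
      obtain ⟨m, hm⟩ := pow_unbounded_of_one_lt (R / (R / 2 ^ (k + 2))) (one_lt_two (α := ℝ))
      have hsub : G k ⊆ closedBall x₀ (2 ^ m * (R / 2 ^ (k + 2))) := by
        intro x hx
        rw [mem_closedBall]
        have h1 : dist x x₀ ≤ R := hR (hGA k x hx) hx₀
        have h2 : R ≤ 2 ^ m * (R / 2 ^ (k + 2)) := by
          rw [div_lt_iff₀ hr'] at hm
          linarith
        linarith
      have hsep' : (G k).Pairwise fun a b => 2 * (R / 2 ^ (k + 2)) < dist a b := by
        have he : 2 * (R / 2 ^ (k + 2)) = R / 2 ^ (k + 1) := by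
          rw [pow_succ]
          ring
        rw [he]
        exact hGsep k
      have := aux_sep hD m hr' hsub hsep'
      rw [Set.encard_le_coe_iff] at this
      exact this.1
    -- the family F
    refine ⟨⋃ k, (fun x => (x, ρ x)) '' G k, ?_, ?_, ?_, ?_⟩
    · rintro p hp
      obtain ⟨k, hk⟩ := Set.mem_iUnion.1 hp
      obtain ⟨x, hx, rfl⟩ := hk
      exact hρB x (hGA k x hx)
    · exact Set.countable_iUnion fun k => ((hGfin k).image _).countable
    · intro x hxA
      obtain ⟨k, hk⟩ := Set.mem_iUnion.1 (hcovered hxA)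
      obtain ⟨x', hx', hmem⟩ := Set.mem_iUnion₂.1 hk
      exact Set.mem_iUnion₂.2 ⟨(x', ρ x'), Set.mem_iUnion.2 ⟨k, ⟨x', hx', rfl⟩⟩, hmem⟩
    · intro y
      -- generations hitting y
      set T : Set ℕ := {k | ∃ x ∈ G k, y ∈ closedBall x (ρ x)} with hT
      have hc : ∀ k : ℕ, ∃ x : X, k ∈ T → (x ∈ G k ∧ y ∈ closedBall x (ρ x)) := by
        intro k
        by_cases hk : k ∈ T
        · obtain ⟨x, hx, hyx⟩ : ∃ x ∈ G k, y ∈ closedBall x (ρ x) := hk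
          exact ⟨x, fun _ => ⟨hx, hyx⟩⟩
        · exact ⟨x₀, fun h => absurd h hk⟩
      choose c hc using hc
      have hinjT : Set.InjOn (fun k => (c k, ρ (c k))) T := by
        intro k hk k' hk' he
        by_contra hne
        have hcc : c k = c k' := congrArg Prod.fst he
        rcases Nat.lt_or_ge k k' with h | h
        · have := (hcross k k' h (c k) (hc k hk).1 (c k') (hc k' hk').1).1
          rw [hcc, dist_self] at this
          exact absurd this (not_lt.2 (hρpos _ (hGA k' _ (hc k' hk').1)).le)
        · have hlt : k' < k := by omega
          have := (hcross k' k hlt (c k') (hc k' hk').1 (c k) (hc k hk).1).1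
          rw [hcc, dist_self] at this
          exact absurd this (not_lt.2 (hρpos _ (hGA k' _ (hc k' hk').1)).le)
      have hTK : T.encard ≤ (K : ℕ∞) := by
        rw [← hinjT.encard_image]
        apply hK
        refine ⟨?_, ?_, ⟨y, ?_⟩⟩
        · rintro p ⟨k, hk, rfl⟩
          exact hρpos _ (hGA k _ (hc k hk).1)
        · rintro p ⟨k, hk, rfl⟩ q ⟨k', hk', rfl⟩ hne
          have hkk' : k ≠ k' := fun h => hne (by rw [h])
          rw [mem_closedBall]
          rcases Nat.lt_or_ge k k' with h | h
          · exact not_le.2 (hcross k k' h (c k) (hc k hk).1 (c k') (hc k' hk').1).2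
          · have hlt : k' < k := by omega
            have h1 := (hcross k' k hlt (c k') (hc k' hk').1 (c k) (hc k hk).1).1
            rw [dist_comm] at h1
            exact not_le.2 h1
        · refine Set.mem_iInter₂.2 ?_
          rintro p ⟨k, hk, rfl⟩
          exact (hc k hk).2
      have hTfin : T.Finite := (Set.encard_le_coe_iff.1 hTK).1
      set S : ℕ → Set (X × ℝ) :=
        fun k => (fun x => (x, ρ x)) '' {x ∈ G k | y ∈ closedBall x (ρ x)} with hS
      have hOsub : {p ∈ ⋃ k, (fun x => (x, ρ x)) '' G k | y ∈ closedBall p.1 p.2} ⊆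
          ⋃ k ∈ hTfin.toFinset, S k := by
        rintro p ⟨hpF, hpy⟩
        obtain ⟨k, hk⟩ := Set.mem_iUnion.1 hpF
        obtain ⟨x, hx, rfl⟩ := hk
        have hyx : y ∈ closedBall x (ρ x) := hpy
        have hkT : k ∈ T := ⟨x, hx, hyx⟩
        exact Set.mem_biUnion (hTfin.mem_toFinset.2 hkT) ⟨x, ⟨hx, hyx⟩, rfl⟩
      have hSk : ∀ k, (S k).encard ≤ ((D ^ 2 : ℕ) : ℕ∞) := by
        intro k
        refine le_trans (Set.encard_image_le _ _) ?_
        have hr' : (0:ℝ) < R / 2 ^ (k + 2) := by positivity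
        refine aux_sep hD 2 (x := y) hr' ?_ ?_
        · rintro x ⟨hx, hyx⟩
          rw [mem_closedBall]
          have hd : dist x y ≤ ρ x := by rw [dist_comm]; exact mem_closedBall.1 hyx
          have h2 : ρ x ≤ R / 2 ^ k := hIhigh k x (hGsub k hx).1
          have he : (2:ℝ) ^ 2 * (R / 2 ^ (k + 2)) = R / 2 ^ k := by
            have h2k : (2:ℝ) ^ k ≠ 0 := by positivity
            field_simp
            ring
          rw [he]
          linarith
        · have he : 2 * (R / 2 ^ (k + 2)) = R / 2 ^ (k + 1) := by
            have h2k : (2:ℝ) ^ k ≠ 0 := by positivity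
            field_simp
            ring
          rw [he]
          exact (hGsep k).mono (Set.sep_subset _ _)
      calc {p ∈ ⋃ k, (fun x => (x, ρ x)) '' G k | y ∈ closedBall p.1 p.2}.encard
          ≤ (⋃ k ∈ hTfin.toFinset, S k).encard := Set.encard_mono hOsub
        _ ≤ (hTfin.toFinset.card : ℕ∞) * ((D ^ 2 : ℕ) : ℕ∞) := aux_sum _ _ _ hSk
        _ ≤ (K : ℕ∞) * ((D ^ 2 : ℕ) : ℕ∞) := by
            apply mul_le_mul_left
            rw [← hTfin.encard_eq_coe_toFinset_card]
            exact hTK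
        _ = ((K * D ^ 2 : ℕ) : ℕ∞) := by push_cast; ring
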